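/- Let k_n → ∞ and k_n/n → 0, and define a_n^{(3)} = log(n/k_n)·μ_0(log(n/k_n)) − 1. Then a_n^{(3)} ∼ −1/log(n/k_n), i.e. a_n^{(3)}·log(n/k_n) → −1. Equivalently, t·μ_0(t) − 1 ∼ −1/t as t → ∞. -/

import Mathlib

open MeasureTheory ProbabilityTheory Filter Real Topology

noncomputable section

/-- `K_ρ(λ) = ∫_1^λ u^(ρ-1) du`. -/
def Krho (ρ lam : ℝ) : ℝ := ∫ u in (1:ℝ)..lam, u ^ (ρ - 1)

/-- `μ_ρ(t) = ∫_0^∞ K_ρ(1 + x/t) e^(-x) dx`. -/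
def muRho (ρ t : ℝ) : ℝ := ∫ x in Set.Ioi (0:ℝ), Krho ρ (1 + x / t) * Real.exp (-x)

/-- `σ_ρ²(t) = ∫_0^∞ K_ρ²(1 + x/t) e^(-x) dx - μ_ρ²(t)`. -/
def sigmaRhoSq (ρ t : ℝ) : ℝ :=
  (∫ x in Set.Ioi (0:ℝ), (Krho ρ (1 + x / t)) ^ 2 * Real.exp (-x)) - (muRho ρ t) ^ 2

/-- A function is slowly varying at infinity. -/
def SlowlyVarying (l : ℝ → ℝ) : Prop :=
  ∀ c > (0:ℝ), Tendsto (fun x => l (c * x) / l x) atTop (𝓝 1)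

/-- A function is regularly varying at infinity with index `ρ`. -/
def RegularlyVarying (g : ℝ → ℝ) (ρ : ℝ) : Prop :=
  ∀ c > (0:ℝ), Tendsto (fun x => g (c * x) / g x) atTop (𝓝 (c ^ ρ))

/-- Convergence in distribution of a sequence of real random variables towards the
law `μlim`, expressed through convergence of integrals of bounded continuous functions. -/
def TendstoInDistribution {Ω : Type*} [MeasurableSpace Ω] (P : Measure Ω)
    (Z : ℕ → Ω → ℝ) (μlim : Measure ℝ) : Prop :=
  ∀ f : BoundedContinuousFunction ℝ ℝ,
    Tendsto (fun n => ∫ ω, f (Z n ω) ∂P) atTop (𝓝 (∫ x, f x ∂μlim))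

/-- Convergence to `0` in probability (`o_P(1)`). -/
def TendstoInProbabilityZero {Ω : Type*} [MeasurableSpace Ω] (P : Measure Ω)
    (Z : ℕ → Ω → ℝ) : Prop :=
  ∀ δ > (0:ℝ), Tendsto (fun n => P {ω | δ ≤ |Z n ω|}) atTop (𝓝 0)

section A3helpers


lemma nonneg_of_deriv {g g' : ℝ → ℝ} (hg0 : g 0 = 0)
    (hd : ∀ u : ℝ, 0 ≤ u → HasDerivAt g (g' u) u) (h' : ∀ u : ℝ, 0 ≤ u → 0 ≤ g' u)
    {u : ℝ} (hu : 0 ≤ u) : 0 ≤ g u := by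
  have hm : MonotoneOn g (Set.Ici (0:ℝ)) := by
    apply monotoneOn_of_deriv_nonneg (convex_Ici 0)
    · exact fun x hx => (hd x hx).continuousAt.continuousWithinAt
    · intro x hx
      rw [interior_Ici] at hx
      exact ((hd x hx.le).differentiableAt).differentiableWithinAt
    · intro x hx
      rw [interior_Ici] at hx
      rw [(hd x hx.le).deriv]
      exact h' x hx.le
  have := hm (Set.self_mem_Ici) (Set.mem_Ici.2 hu) hu
  linarith [hg0 ▸ this]

lemma hasDerivAt_log1p (v : ℝ) (hv : 0 ≤ v) :
    HasDerivAt (fun w : ℝ => Real.log (1+w)) ((1+v)⁻¹) v := by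
  have h1 : (0:ℝ) < 1 + v := by linarith
  simpa [Function.comp_def] using (Real.hasDerivAt_log h1.ne').comp v ((hasDerivAt_id v).const_add 1)

lemma log_ge (u : ℝ) (hu : 0 ≤ u) : u - u^2/2 ≤ Real.log (1 + u) := by
  have h : 0 ≤ Real.log (1+u) - (u - u^2/2) := by
    apply nonneg_of_deriv (g' := fun v => (1+v)⁻¹ - (1 - v)) (by simp) ?_ ?_ hu
    · intro v hv
      have hpoly : HasDerivAt (fun w : ℝ => w - w^2/2) (1 - v) v := by
        have : HasDerivAt (fun w : ℝ => w - w^2/2) _ v := ((hasDerivAt_id v).sub ((hasDerivAt_pow 2 v).div_const 2))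
        simpa using this
      exact (hasDerivAt_log1p v hv).sub hpoly
    · intro v hv
      have h1 : (0:ℝ) < 1 + v := by linarith
      rw [sub_nonneg, inv_eq_one_div, le_div_iff₀ h1]
      nlinarith
  linarith

lemma log_le3 (u : ℝ) (hu : 0 ≤ u) : Real.log (1 + u) ≤ u - u^2/2 + u^3/3 := by
  have h : 0 ≤ (u - u^2/2 + u^3/3) - Real.log (1+u) := by
    apply nonneg_of_deriv (g' := fun v => (1 - v + v^2) - (1+v)⁻¹) (by simp) ?_ ?_ hu
    · intro v hv
      have hpoly : HasDerivAt (fun w : ℝ => w - w^2/2 + w^3/3) (1 - v + v^2) v := by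
        have : HasDerivAt (fun w : ℝ => w - w^2/2 + w^3/3) _ v := (((hasDerivAt_id v).sub ((hasDerivAt_pow 2 v).div_const 2)).add
          ((hasDerivAt_pow 3 v).div_const 3))
        convert this using 1
        ring
      exact hpoly.sub (hasDerivAt_log1p v hv)
    · intro v hv
      have h1 : (0:ℝ) < 1 + v := by linarith
      rw [sub_nonneg, inv_eq_one_div, div_le_iff₀ h1]
      nlinarith
  linarith

lemma int_pow (n : ℕ) : IntegrableOn (fun x : ℝ => x ^ n * Real.exp (-x)) (Set.Ioi 0) := by
  have h := Real.GammaIntegral_convergent (s := (n:ℝ)+1) (by positivity)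
  refine h.congr_fun ?_ measurableSet_Ioi
  intro x hx
  simp only [show ((n:ℝ)+1-1) = (n:ℝ) by ring, Real.rpow_natCast]
  ring

lemma int_pow_eq (n : ℕ) :
    ∫ x in Set.Ioi (0:ℝ), x ^ n * Real.exp (-x) = (n.factorial : ℝ) := by
  have h : Real.Gamma ((n:ℝ) + 1) = (n.factorial : ℝ) := Real.Gamma_nat_eq_factorial n
  rw [Real.Gamma_eq_integral (show (0:ℝ) < (n:ℝ)+1 by positivity)] at h
  rw [← h]
  apply setIntegral_congr_fun measurableSet_Ioi
  intro x hx
  simp only [show ((n:ℝ)+1-1) = (n:ℝ) by ring, Real.rpow_natCast]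
  ring

lemma Krho_zero (lam : ℝ) (hl : 0 < lam) : Krho 0 lam = Real.log lam := by
  unfold Krho
  have h0 : (0:ℝ) ∉ Set.uIcc 1 lam := Set.notMem_uIcc_of_lt one_pos hl
  rw [intervalIntegral.integral_congr (g := fun u => u⁻¹) ?_, integral_inv h0]
  · simp
  · intro u hu
    have hu0 : 0 < u := by
      rw [Set.mem_uIcc] at hu
      rcases hu with h | h <;> [linarith [h.1]; linarith [h.1]]
    show u ^ ((0:ℝ)-1) = u⁻¹
    rw [show (0:ℝ)-1 = -1 by ring, Real.rpow_neg_one]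

lemma muRho_zero (t : ℝ) (ht : 0 < t) :
    muRho 0 t = ∫ x in Set.Ioi (0:ℝ), Real.log (1 + x/t) * Real.exp (-x) := by
  apply setIntegral_congr_fun measurableSet_Ioi
  intro x hx
  have hx0 : (0:ℝ) < x := hx
  dsimp only
  rw [Krho_zero _ (by positivity)]

lemma int_log (t : ℝ) (ht : 0 < t) :
    IntegrableOn (fun x => Real.log (1 + x/t) * Real.exp (-x)) (Set.Ioi 0) := by
  apply Integrable.mono ((int_pow 1).const_mul t⁻¹)
  · exact ((Real.measurable_log.comp (measurable_const.add
      (measurable_id.div_const t))).mul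
      (Real.measurable_exp.comp measurable_neg)).aestronglyMeasurable
  · rw [ae_restrict_iff' measurableSet_Ioi]
    filter_upwards with x hx
    have hx0 : (0:ℝ) < x := hx
    have hlog0 : (0:ℝ) ≤ Real.log (1 + x/t) := Real.log_nonneg (by
      have : 0 ≤ x / t := by positivity
      linarith)
    have hlog : Real.log (1 + x/t) ≤ x/t := by
      have := Real.log_le_sub_one_of_pos (show (0:ℝ) < 1 + x/t by positivity)
      linarith
    have he : (0:ℝ) < Real.exp (-x) := Real.exp_pos _
    have e1 : ‖Real.log (1 + x/t) * Real.exp (-x)‖ = Real.log (1 + x/t) * Real.exp (-x) := by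
      rw [Real.norm_eq_abs, abs_of_nonneg (by positivity)]
    have e2 : ‖t⁻¹ * (x ^ 1 * Real.exp (-x))‖ = t⁻¹ * (x ^ 1 * Real.exp (-x)) := by
      rw [Real.norm_eq_abs, abs_of_nonneg (by positivity)]
    rw [e1, e2]
    have e3 : x / t * Real.exp (-x) = t⁻¹ * (x ^ 1 * Real.exp (-x)) := by
      field_simp
    nlinarith [mul_le_mul_of_nonneg_right hlog he.le]

lemma ptwise_low (t x : ℝ) (ht : 0 < t) (hx : 0 < x) :
    -(x^2)/2 ≤ t*(t*Real.log (1+x/t) - x) := by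
  have hu : 0 ≤ x/t := by positivity
  have hL := log_ge (x/t) hu
  have h1 : x/t * t = x := div_mul_cancel₀ x ht.ne'
  have h2 : (x/t)^2 * t^2 = x^2 := by rw [← mul_pow, h1]
  nlinarith [mul_le_mul_of_nonneg_left hL (le_of_lt (mul_pos ht ht))]

lemma ptwise_up (t x : ℝ) (ht : 1 ≤ t) (hx : 0 < x) :
    t*(t*Real.log (1+x/t) - x) ≤ -(x^2)/2 + x^3/(3*t) := by
  have ht0 : (0:ℝ) < t := lt_of_lt_of_le one_pos ht
  have hu : 0 ≤ x/t := by positivity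
  have hL := log_le3 (x/t) hu
  have h1 : x/t * t = x := div_mul_cancel₀ x ht0.ne'
  have h2 : (x/t)^2 * t^2 = x^2 := by rw [← mul_pow, h1]
  have h3 : (x/t)^3 * t^3 = x^3 := by rw [← mul_pow, h1]
  rw [← mul_le_mul_iff_right₀ ht0]
  have hexp : t * (-(x^2)/2 + x^3/(3*t)) = t * (-(x^2)/2) + x^3/3 := by
    field_simp
  rw [hexp]
  nlinarith [mul_le_mul_of_nonneg_left hL (le_of_lt (mul_pos ht0 (mul_pos ht0 ht0)))]

lemma int_H (t : ℝ) (ht : 1 ≤ t) :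
    IntegrableOn (fun x => (t*(t*Real.log (1+x/t) - x))*Real.exp (-x)) (Set.Ioi 0) := by
  have ht0 : (0:ℝ) < t := lt_of_lt_of_le one_pos ht
  apply Integrable.mono (((int_pow 2).const_mul (1/2)).add ((int_pow 3).const_mul (1/3)))
  · exact ((measurable_const.mul ((measurable_const.mul (Real.measurable_log.comp
      (measurable_const.add (measurable_id.div_const t)))).sub measurable_id)).mul
      (Real.measurable_exp.comp measurable_neg)).aestronglyMeasurable
  · rw [ae_restrict_iff' measurableSet_Ioi]
    filter_upwards with x hx
    have hx0 : (0:ℝ) < x := hx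
    have hl := ptwise_low t x ht0 hx0
    have hup := ptwise_up t x ht hx0
    have he : (0:ℝ) < Real.exp (-x) := Real.exp_pos _
    have habs : |t*(t*Real.log (1+x/t) - x)| ≤ x^2/2 + x^3/3 := by
      rw [abs_le]
      constructor
      · have : x^3/(3*t) ≥ 0 := by positivity
        nlinarith
      · have hx3 : x^3/(3*t) ≤ x^3/3 := by
          apply div_le_div_of_nonneg_left (by positivity) (by norm_num) ?_
          linarith
        nlinarith
    simp only [Pi.add_apply]
    rw [Real.norm_eq_abs, Real.norm_eq_abs, abs_mul, abs_of_nonneg he.le]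
    have hrhs : 1/2 * (x^2 * Real.exp (-x)) + 1/3 * (x^3 * Real.exp (-x))
        = (x^2/2 + x^3/3) * Real.exp (-x) := by ring
    rw [abs_of_nonneg (by positivity : (0:ℝ) ≤ 1/2 * (x^2 * Real.exp (-x)) + 1/3 * (x^3 * Real.exp (-x))), hrhs]
    exact mul_le_mul_of_nonneg_right habs he.le

lemma key_eq (t : ℝ) (ht : 1 ≤ t) :
    (t * muRho 0 t - 1) * t
      = ∫ x in Set.Ioi (0:ℝ), (t*(t*Real.log (1+x/t) - x))*Real.exp (-x) := by
  have ht0 : (0:ℝ) < t := lt_of_lt_of_le one_pos ht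
  have e1 : ∀ x:ℝ, (t*(t*Real.log (1+x/t) - x))*Real.exp (-x)
      = (t*t) * (Real.log (1+x/t) * Real.exp (-x)) - t * (x^1 * Real.exp (-x)) := by
    intro x; ring
  simp_rw [e1]
  rw [integral_sub ((int_log t ht0).const_mul (t*t)) ((int_pow 1).const_mul t),
    integral_const_mul, integral_const_mul, int_pow_eq, muRho_zero t ht0]
  simp [Nat.factorial]
  ring

lemma key : Tendsto (fun t : ℝ => (t * muRho 0 t - 1) * t) atTop (𝓝 (-1)) := by
  have hup_t : Tendsto (fun t : ℝ => -1 + 2/t) atTop (𝓝 (-1)) := by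
    have : Tendsto (fun t : ℝ => 2/t) atTop (𝓝 0) :=
      Tendsto.div_atTop tendsto_const_nhds tendsto_id
    simpa using (tendsto_const_nhds (x := (-1:ℝ)) (f := atTop)).add this
  apply tendsto_of_tendsto_of_tendsto_of_le_of_le'
    (tendsto_const_nhds : Tendsto (fun _ : ℝ => (-1:ℝ)) atTop _) hup_t
  · filter_upwards [eventually_ge_atTop (1:ℝ)] with t ht
    have ht0 : (0:ℝ) < t := lt_of_lt_of_le one_pos ht
    rw [key_eq t ht]
    have hm1 : (-1:ℝ) = ∫ x in Set.Ioi (0:ℝ), (-(1/2)) * (x^2 * Real.exp (-x)) := by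
      rw [integral_const_mul, int_pow_eq]; norm_num [Nat.factorial]
    rw [hm1]
    apply setIntegral_mono_on (((int_pow 2).const_mul _)) (int_H t ht) measurableSet_Ioi
    intro x hx
    have hx0 : (0:ℝ) < x := hx
    have := ptwise_low t x ht0 hx0
    have he : (0:ℝ) < Real.exp (-x) := Real.exp_pos _
    nlinarith [mul_le_mul_of_nonneg_right this he.le]
  · filter_upwards [eventually_ge_atTop (1:ℝ)] with t ht
    have ht0 : (0:ℝ) < t := lt_of_lt_of_le one_pos ht
    rw [key_eq t ht]
    have hm1 : (-1:ℝ) + 2/t = ∫ x in Set.Ioi (0:ℝ),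
        ((-(1/2)) * (x^2 * Real.exp (-x)) + (1/(3*t)) * (x^3 * Real.exp (-x))) := by
      rw [integral_add ((int_pow 2).const_mul _) ((int_pow 3).const_mul _),
        integral_const_mul, integral_const_mul, int_pow_eq, int_pow_eq]
      norm_num [Nat.factorial]
      field_simp
      ring
    rw [hm1]
    apply setIntegral_mono_on (int_H t ht)
      (((int_pow 2).const_mul _).add ((int_pow 3).const_mul _)) measurableSet_Ioi
    intro x hx
    have hx0 : (0:ℝ) < x := hx
    have := ptwise_up t x ht hx0
    have he : (0:ℝ) < Real.exp (-x) := Real.exp_pos _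
    simp only [Pi.add_apply]
    have h2 : (1/(3*t)) * (x^3 * Real.exp (-x)) = (x^3/(3*t)) * Real.exp (-x) := by ring
    nlinarith [mul_le_mul_of_nonneg_right this he.le]

end A3helpers

theorem a_three_asymptotics
    (k : ℕ → ℕ) (hkbd : ∀ n, 2 ≤ n → 1 ≤ k n ∧ k n < n)
    (hk : Tendsto (fun n => (k n : ℝ)) atTop atTop)
    (hkn : Tendsto (fun n => (k n : ℝ) / n) atTop (𝓝 0))
    (a3 : ℕ → ℝ)
    (ha3 : ∀ n, a3 n =
      Real.log ((n : ℝ) / (k n : ℝ)) * muRho 0 (Real.log ((n : ℝ) / (k n : ℝ))) - 1) :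
    Tendsto (fun n => a3 n * Real.log ((n : ℝ) / (k n : ℝ))) atTop (𝓝 (-1)) ∧
    Tendsto (fun t : ℝ => (t * muRho 0 t - 1) * t) atTop (𝓝 (-1)) := by
  have hL : Tendsto (fun n : ℕ => Real.log ((n:ℝ)/(k n : ℝ))) atTop atTop := by
    apply Real.tendsto_log_atTop.comp
    have hpos : ∀ᶠ n in atTop, ((k n : ℝ)/n) ∈ Set.Ioi (0:ℝ) := by
      filter_upwards [eventually_ge_atTop 2] with n hn
      have h1 := (hkbd n hn).1
      have hk0 : (0:ℝ) < (k n : ℝ) := by exact_mod_cast Nat.lt_of_lt_of_le Nat.zero_lt_one h1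
      have hn0 : (0:ℝ) < (n : ℝ) := by positivity
      exact Set.mem_Ioi.2 (by positivity)
    have hinv : Tendsto (fun n : ℕ => ((k n : ℝ)/n)⁻¹) atTop atTop :=
      Tendsto.inv_tendsto_nhdsGT_zero (tendsto_nhdsWithin_iff.2 ⟨hkn, hpos⟩)
    refine hinv.congr ?_
    intro n; rw [inv_div]
  refine ⟨?_, key⟩
  have h := key.comp hL
  refine h.congr ?_
  intro n
  simp only [Function.comp]
  rw [ha3 n]
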